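/- arXiv:1607.08806 — 3 statements merged into one kernel-verified Lean document; each statement's English description precedes it below -/
import Mathlib

section
/- In the reflected Gray code Γ_n, the first bitstring of weight k (0 ≤ k ≤ n) is 1^k 0^{n−k}, and for 0 < k ≤ n the last bitstring of weight k is 1^{k−1} 0^{n−k} 1. -/
/-- The reflected Gray code `Γ_n`. -/
def gray : ℕ → List (List Bool)
  | 0 => [[]]
  | n + 1 => (gray n).map (fun x => x ++ [false]) ++ ((gray n).reverse.map (fun x => x ++ [true]))

/-- `Γ_{n,k}`: the subsequence of `Γ_n` consisting of the bitstrings of weight `k`. -/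
def grayLevel (n k : ℕ) : List (List Bool) := (gray n).filter (fun x => x.count true = k)

lemma length_of_mem_gray : ∀ n, ∀ x ∈ gray n, x.length = n := by
  intro n
  induction n with
  | zero => intro x hx; simp [gray] at hx; simp [hx]
  | succ n ih =>
    intro x hx
    simp only [gray, List.mem_append, List.mem_map, List.mem_reverse] at hx
    rcases hx with ⟨y, hy, rfl⟩ | ⟨y, hy, rfl⟩ <;> simp [ih y hy]

lemma grayLevel_eq_nil {n k : ℕ} (h : n < k) : grayLevel n k = [] := by
  rw [grayLevel, List.filter_eq_nil_iff]
  intro a ha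
  have h1 : a.count true ≤ n := (length_of_mem_gray n a ha) ▸ (List.count_le_length : a.count true ≤ a.length)
  simp only [decide_eq_true_eq]
  omega

lemma gray_main : ∀ n k, k ≤ n →
    (grayLevel n k).head? = some (List.replicate k true ++ List.replicate (n - k) false)
    ∧ (0 < k → (grayLevel n k).getLast? =
        some (List.replicate (k - 1) true ++ List.replicate (n - k) false ++ [true])) := by
  intro n
  induction n with
  | zero =>
    intro k hk
    interval_cases k
    refine ⟨by simp [grayLevel, gray], by omega⟩
  | succ n ih =>
    intro k hk
    have hdecomp : grayLevel (n+1) k =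
        ((grayLevel n k).map (fun x => x ++ [false])) ++
        (((gray n).filter (fun x => x.count true + 1 = k)).reverse.map (fun x => x ++ [true])) := by
      simp only [grayLevel, gray, List.filter_append, List.filter_map, List.filter_reverse]
      congr 1
      · congr 1
        apply List.filter_congr
        intro x _
        simp [List.count_append]
      · congr 2
        apply List.filter_congr
        intro x _
        simp [List.count_append]
    rcases Nat.eq_zero_or_pos k with rfl | hkpos
    · have h2 : ((gray n).filter (fun x => x.count true + 1 = 0)) = [] := by
        rw [List.filter_eq_nil_iff]; intro a _; simp
      rw [hdecomp, h2]
      refine ⟨?_, by omega⟩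
      simp only [List.reverse_nil, List.map_nil, List.append_nil, List.head?_map]
      rw [(ih 0 (Nat.zero_le n)).1]
      simp [List.replicate_succ']
    · obtain ⟨j, rfl⟩ : ∃ j, k = j + 1 := ⟨k - 1, by omega⟩
      have hj : j ≤ n := by omega
      have h2 : ((gray n).filter (fun x => x.count true + 1 = j + 1)) = grayLevel n j := by
        rw [grayLevel]; congr 1; funext x; simp
      rw [hdecomp, h2]
      have hjnil : grayLevel n j ≠ [] := by
        intro h; have := (ih j hj).1; rw [h] at this; simp at this
      constructor
      · -- head
        rcases Nat.lt_or_ge j n with hjn | hjn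
        · -- j + 1 ≤ n : head comes from the first part
          have hhead := (ih (j+1) hjn).1
          have : ((grayLevel n (j+1)).map (fun x => x ++ [false])).head? =
              some (List.replicate (j+1) true ++ List.replicate (n+1 - (j+1)) false) := by
            rw [List.head?_map, hhead]
            have : n - (j+1) + 1 = n + 1 - (j+1) := by omega
            simp [List.append_assoc, ← List.replicate_succ' (n := n - (j+1)), this]
          generalize hL : (grayLevel n (j+1)).map (fun x => x ++ [false]) = L at this
          cases L with
          | nil => simp at this
          | cons a L' => simp at this ⊢; simp [this]
        · -- j = n : first part is empty, head comes from the reversed second part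
          have hj' : j = n := by omega
          subst hj'
          rw [grayLevel_eq_nil (by omega), List.map_nil, List.nil_append]
          rw [List.head?_map, List.head?_reverse]
          have hlast : (grayLevel j j).getLast? = some (List.replicate j true) := by
            rcases Nat.eq_zero_or_pos j with rfl | hn0
            · simp [grayLevel, gray]
            · have := (ih j le_rfl).2 hn0
              rw [this]
              congr 1
              have : j - 1 + 1 = j := by omega
              simp [← List.replicate_succ' (n := j - 1), this]
          rw [hlast]
          have : j + 1 - (j + 1) = 0 := by omega
          simp [this, List.replicate_succ']
      · -- last
        intro _
        have hsnd : ((grayLevel n j).reverse.map (fun x => x ++ [true])) ≠ [] := by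
          simp [hjnil]
        rw [List.getLast?_append_of_ne_nil _ hsnd]
        rw [List.getLast?_map, List.getLast?_reverse, (ih j hj).1]
        have h3 : n + 1 - (j + 1) = n - j := by omega
        simp [h3]

/-- In `Γ_n`, the first bitstring of weight `k` is `1^k 0^{n-k}`, and for `k > 0`
the last bitstring of weight `k` is `1^{k-1} 0^{n-k} 1`. -/
theorem stmt5 (n k : ℕ) (hn : 1 ≤ n) (hk : k ≤ n) :
    (grayLevel n k).head? = some (List.replicate k true ++ List.replicate (n - k) false)
    ∧ (0 < k → (grayLevel n k).getLast? =
        some (List.replicate (k - 1) true ++ List.replicate (n - k) false ++ [true])) :=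
  gray_main n k hk
end

section
/- In the reflected Gray code Γ_n, the number of weight-k bitstrings whose successor in Γ_n has weight k+1 equals C(n−1,k), and the number of weight-k bitstrings whose successor has weight k−1 equals C(n−1,k−1). -/
namespace GrayAux
variable {α β : Type*}

variable {α β : Type*}

def adj : List α → List (α × α)
  | a :: b :: t => (a, b) :: adj (b :: t)
  | _ => []

@[simp] lemma adj_nil : adj ([] : List α) = [] := rfl
@[simp] lemma adj_single (a : α) : adj [a] = [] := rfl
@[simp] lemma adj_cons_cons (a b : α) (t : List α) :
    adj (a :: b :: t) = (a, b) :: adj (b :: t) := rfl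

lemma adj_append : ∀ (l1 l2 : List α) (h1 : l1 ≠ []) (h2 : l2 ≠ []),
    adj (l1 ++ l2) = adj l1 ++ (l1.getLast h1, l2.head h2) :: adj l2
  | [a], l2, _, h2 => by
    cases l2 with
    | nil => exact absurd rfl h2
    | cons b t => simp [adj]
  | a :: a' :: t1, l2, h1, h2 => by
    have ih := adj_append (a' :: t1) l2 (by simp) h2
    simp only [List.cons_append, adj_cons_cons, ih, List.getLast_cons (by simp : a' :: t1 ≠ [])]
    simpa using ih

lemma adj_map (f : α → β) : ∀ (l : List α), adj (l.map f) = (adj l).map (Prod.map f f)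
  | [] => rfl
  | [a] => rfl
  | a :: b :: t => by
    have ih := adj_map f (b :: t)
    simp only [List.map_cons] at ih ⊢
    simp [adj, ih]

lemma adj_reverse : ∀ (l : List α), adj l.reverse = ((adj l).map Prod.swap).reverse
  | [] => rfl
  | [a] => rfl
  | a :: b :: t => by
    have ih := adj_reverse (b :: t)
    have h1 : (b :: t).reverse ≠ [] := by simp
    have hrev : (a :: b :: t).reverse = (b :: t).reverse ++ [a] := by simp
    rw [hrev, adj_append _ [a] h1 (by simp), ih]
    simp only [List.getLast_reverse, adj_cons_cons, List.map_cons, List.reverse_cons,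
      List.head_cons, Prod.swap_prod_mk]
    simp

lemma zip_rotate_aux : ∀ (t : List α) (a x : α),
    (a :: t).zip (t ++ [x]) = adj (a :: t) ++ [((a :: t).getLast (by simp), x)]
  | [], a, x => by simp [adj]
  | b :: t', a, x => by
    have ih := zip_rotate_aux t' b x
    simp only [List.cons_append, List.zip_cons_cons, ih, adj_cons_cons,
      List.getLast_cons (by simp : b :: t' ≠ [])]
    try simp

lemma zip_rotate (l : List α) (h : l ≠ []) :
    l.zip (l.rotate 1) = adj l ++ [(l.getLast h, l.head h)] := by
  cases l with
  | nil => exact absurd rfl h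
  | cons a t =>
    rw [List.rotate_cons_succ, List.rotate_zero]
    simpa using zip_rotate_aux t a a

/-- predicate: step goes up from weight `k` -/
def upP (k : ℕ) (p : List Bool × List Bool) : Bool :=
  decide (p.1.count true = k ∧ p.2.count true = k + 1)

/-- predicate: step goes down from weight `k` -/
def dnP (k : ℕ) (p : List Bool × List Bool) : Bool :=
  decide (p.1.count true = k ∧ p.2.count true + 1 = k)

def up (k : ℕ) (l : List (List Bool)) : ℕ := (adj l).countP (upP k)
def dn (k : ℕ) (l : List (List Bool)) : ℕ := (adj l).countP (dnP k)

lemma gray_succ (n : ℕ) : gray (n + 1)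
    = (gray n).map (fun x => x ++ [false]) ++ ((gray n).reverse.map (fun x => x ++ [true])) := rfl

lemma gray_ne_nil (n : ℕ) : gray n ≠ [] := by
  induction n with
  | zero => simp [gray]
  | succ n ih => simp [gray_succ, ih]

lemma head?_gray (n : ℕ) : (gray n).head? = some (List.replicate n false) := by
  induction n with
  | zero => rfl
  | succ n ih =>
    rw [gray_succ, List.head?_append_of_ne_nil _ (by simp [gray_ne_nil]), List.head?_map, ih,
      Option.map_some]
    simp [← List.replicate_succ']

lemma head_gray (n : ℕ) (h : gray n ≠ []) : (gray n).head h = List.replicate n false := by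
  have := head?_gray n
  rw [List.head?_eq_head h] at this
  exact Option.some_inj.mp this

lemma getLast_gray (n : ℕ) (h : gray (n + 1) ≠ []) :
    (gray (n + 1)).getLast h = List.replicate n false ++ [true] := by
  have h2 := head?_gray n
  have : (gray (n+1)).getLast? = some (List.replicate n false ++ [true]) := by
    rw [gray_succ, List.getLast?_append_of_ne_nil _ (by simp [gray_ne_nil]), List.getLast?_map,
      List.getLast?_reverse, h2, Option.map_some]
  rw [List.getLast?_eq_getLast h] at this
  exact Option.some_inj.mp this

lemma count_getLast_gray (n : ℕ) (h : gray (n+1) ≠ []) :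
    ((gray (n+1)).getLast h).count true = 1 := by
  rw [getLast_gray, List.count_append]
  simp [List.count_replicate]

lemma count_head_gray (n : ℕ) (h : gray n ≠ []) :
    ((gray n).head h).count true = 0 := by
  rw [head_gray]
  simp [List.count_replicate]

/-- the main recurrences -/
lemma up_dn_gray (n : ℕ) : ∀ k : ℕ,
    up k (gray (n + 1)) = n.choose k ∧
    dn k (gray (n + 1)) = if k ≤ 1 then 0 else n.choose (k - 1) := by
  induction n with
  | zero =>
    intro k
    have : gray 1 = [[false], [true]] := rfl
    rw [this]
    match k with
    | 0 => simp [up, dn, adj, upP, dnP, List.countP_cons]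
    | 1 => simp [up, dn, adj, upP, dnP, List.countP_cons]
    | (m+2) => simp [up, dn, adj, upP, dnP, List.countP_cons]
  | succ n ih =>
    intro k
    set g := gray (n + 1) with hg
    have hgne : g ≠ [] := by rw [hg]; exact gray_ne_nil _
    have hA : g.map (fun x => x ++ [false]) ≠ [] := by simp [hgne]
    have hB : g.reverse.map (fun x => x ++ [true]) ≠ [] := by simp [hgne]
    have c0 : List.count true [false] = 0 := rfl
    have c1 : List.count true [true] = 1 := rfl
    have hadj : adj (gray (n + 2)) = adj (g.map (fun x => x ++ [false]))
        ++ ((g.map (fun x => x ++ [false])).getLast hA,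
            (g.reverse.map (fun x => x ++ [true])).head hB)
          :: adj (g.reverse.map (fun x => x ++ [true])) := by
      rw [gray_succ (n+1)]
      exact adj_append _ _ hA hB
    -- junction weights
    have hlastA : ((g.map (fun x => x ++ [false])).getLast hA).count true = 1 := by
      rw [List.getLast_map, List.count_append]
      simp [count_getLast_gray n (gray_ne_nil (n+1))]
      exact count_getLast_gray n _
    have hheadB : ((g.reverse.map (fun x => x ++ [true])).head hB).count true = 2 := by
      rw [List.head_map, List.head_reverse, List.count_append]
      simp [count_getLast_gray n (gray_ne_nil (n+1))]
      exact count_getLast_gray n _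
    -- countP over parts
    have hmapA : ∀ q : List Bool × List Bool → Bool,
        (adj (g.map (fun x => x ++ [false]))).countP q
          = (adj g).countP (fun p => q (p.1 ++ [false], p.2 ++ [false])) := by
      intro q
      rw [adj_map, List.countP_map]
      rfl
    have hmapB : ∀ q : List Bool × List Bool → Bool,
        (adj (g.reverse.map (fun x => x ++ [true]))).countP q
          = (adj g).countP (fun p => q (p.2 ++ [true], p.1 ++ [true])) := by
      intro q
      rw [adj_map, adj_reverse, List.map_reverse, List.countP_reverse, List.map_map,
        List.countP_map]
      rfl
    constructor
    · rw [up, hadj, List.countP_append, List.countP_cons, hmapA, hmapB]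
      have e1 : (adj g).countP (fun p => upP k (p.1 ++ [false], p.2 ++ [false])) = up k g := by
        apply List.countP_congr
        intro p _
        simp only [upP, List.count_append, c0, decide_eq_true_eq]
        omega
      have e2 : (adj g).countP (fun p => upP k (p.2 ++ [true], p.1 ++ [true])) = dn k g := by
        apply List.countP_congr
        intro p _
        simp only [upP, dnP, List.count_append, c1, decide_eq_true_eq]
        omega
      have e3 : (upP k ((g.map (fun x => x ++ [false])).getLast hA,
          (g.reverse.map (fun x => x ++ [true])).head hB) : Bool)
            = decide (k = 1) := by
        simp only [upP, hlastA, hheadB, decide_eq_decide]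
        omega
      rw [e1, e2, e3, (ih k).1, (ih k).2]
      match k with
      | 0 => simp
      | 1 => simp [Nat.choose_one_right]
      | (m+2) =>
        have h1 : ¬(m + 2 ≤ 1) := by omega
        have h2 : (decide (m + 2 = 1)) = false := by simp
        have h3 : m + 2 - 1 = m + 1 := rfl
        have h4 : n.choose (m + 1 + 1) = n.choose (m + 2) := rfl
        rw [if_neg h1, h2, h3, Nat.choose_succ_succ' n (m+1), h4]
        simp only [Bool.false_eq_true, if_false]
        omega
    · rw [dn, hadj, List.countP_append, List.countP_cons, hmapA, hmapB]
      have e1 : (adj g).countP (fun p => dnP k (p.1 ++ [false], p.2 ++ [false])) = dn k g := by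
        apply List.countP_congr
        intro p _
        simp only [dnP, List.count_append, c0, decide_eq_true_eq]
        omega
      have e3 : (dnP k ((g.map (fun x => x ++ [false])).getLast hA,
          (g.reverse.map (fun x => x ++ [true])).head hB) : Bool) = false := by
        simp only [dnP, hlastA, hheadB]
        simp only [decide_eq_false_iff_not]
        omega
      rw [e1, e3, (ih k).2]
      match k with
      | 0 =>
        have e2 : (adj g).countP (fun p => dnP 0 (p.2 ++ [true], p.1 ++ [true])) = 0 := by
          rw [List.countP_eq_zero]
          intro p _
          simp only [dnP, List.count_append, c1, decide_eq_true_eq]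
          omega
        simp [e2]
      | 1 =>
        have e2 : (adj g).countP (fun p => dnP 1 (p.2 ++ [true], p.1 ++ [true])) = 0 := by
          rw [List.countP_eq_zero]
          intro p _
          simp only [dnP, List.count_append, c1, decide_eq_true_eq]
          omega
        simp [e2]
      | (m+2) =>
        have e2 : (adj g).countP (fun p => dnP (m+2) (p.2 ++ [true], p.1 ++ [true]))
            = up m g := by
          apply List.countP_congr
          intro p _
          simp only [dnP, upP, List.count_append, c1, decide_eq_true_eq]
          omega
        rw [e2, (ih m).1]
        have h1 : ¬(m + 2 ≤ 1) := by omega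
        have h3 : m + 2 - 1 = m + 1 := rfl
        rw [if_neg h1, if_neg h1, h3, Nat.choose_succ_succ' n m]
        simp
        omega


lemma card_filter_eq_countP (N : ℕ) (p : Fin N → Prop) [DecidablePred p] :
    (Finset.univ.filter p).card = (List.finRange N).countP (fun i => decide (p i)) := by
  rw [Fin.univ_def]
  simp [Finset.filter, Finset.card, List.countP_eq_length_filter, Multiset.filter_coe]

lemma map_finRange_eq_zip_rotate {α : Type*} (l : List α) (h : 0 < l.length) :
    (List.finRange l.length).map
      (fun i => (l.get i, l.get ⟨((i : ℕ) + 1) % l.length, Nat.mod_lt _ h⟩))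
      = l.zip (l.rotate 1) := by
  apply List.ext_get
  · simp
  · intro i h1 h2
    simp [List.getElem_rotate]

lemma bridge (m : ℕ) (q : List Bool × List Bool → Bool) :
    ((List.finRange (gray (m+1)).length).countP
      (fun i => q ((gray (m+1)).get i,
        (gray (m+1)).get ⟨((i : ℕ) + 1) % (gray (m+1)).length,
          Nat.mod_lt _ (List.length_pos_iff.mpr (gray_ne_nil _))⟩)))
    = (adj (gray (m+1))).countP q
      + (if q ((gray (m+1)).getLast (gray_ne_nil _), (gray (m+1)).head (gray_ne_nil _))
          then 1 else 0) := by
  have h := List.countP_map (p := q)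
    (f := fun i : Fin (gray (m+1)).length => ((gray (m+1)).get i,
      (gray (m+1)).get ⟨((i : ℕ) + 1) % (gray (m+1)).length,
        Nat.mod_lt _ (List.length_pos_iff.mpr (gray_ne_nil _))⟩))
    (l := List.finRange (gray (m+1)).length)
  rw [map_finRange_eq_zip_rotate _ (List.length_pos_iff.mpr (gray_ne_nil _)),
    zip_rotate _ (gray_ne_nil _), List.countP_append] at h
  refine Eq.trans (Eq.trans rfl h.symm) ?_
  simp [List.countP_cons]

end GrayAux

open GrayAux in
/-- In `Γ_n`, the number of weight-`k` bitstrings whose cyclic successor has weight `k+1`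
is `C(n-1,k)`, and the number of weight-`k` bitstrings whose cyclic successor has weight
`k-1` is `C(n-1,k-1)` (with the convention `C(n-1,-1) = 0`, encoded by the case `k = 0`). -/
theorem stmt8 (n k : ℕ) (hn : 1 ≤ n) (hk : k ≤ n) :
    ((Finset.univ.filter (fun i : Fin (gray n).length =>
        ((gray n).get i).count true = k ∧
        ((gray n).get ⟨((i : ℕ) + 1) % (gray n).length, Nat.mod_lt _ i.pos⟩).count true
          = k + 1)).card = (n - 1).choose k)
    ∧ ((Finset.univ.filter (fun i : Fin (gray n).length =>
        ((gray n).get i).count true = k ∧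
        ((gray n).get ⟨((i : ℕ) + 1) % (gray n).length, Nat.mod_lt _ i.pos⟩).count true + 1
          = k)).card = if k = 0 then 0 else (n - 1).choose (k - 1)) := by
  obtain ⟨m, rfl⟩ : ∃ m, n = m + 1 := ⟨n - 1, by omega⟩
  have hne : gray (m + 1) ≠ [] := gray_ne_nil _
  have hlast : ((gray (m+1)).getLast hne).count true = 1 := count_getLast_gray m hne
  have hhead : ((gray (m+1)).head hne).count true = 0 := count_head_gray (m+1) hne
  constructor
  · rw [card_filter_eq_countP]
    have h1 : ((List.finRange (gray (m+1)).length).countP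
        (fun i => decide (((gray (m+1)).get i).count true = k ∧
          ((gray (m+1)).get ⟨((i : ℕ) + 1) % (gray (m+1)).length,
            Nat.mod_lt _ i.pos⟩).count true = k + 1)))
        = ((List.finRange (gray (m+1)).length).countP
          (fun i => upP k ((gray (m+1)).get i,
            (gray (m+1)).get ⟨((i : ℕ) + 1) % (gray (m+1)).length,
              Nat.mod_lt _ (List.length_pos_iff.mpr (gray_ne_nil _))⟩))) := by
      apply List.countP_congr
      intro i _
      simp [upP]
    rw [h1, bridge m (upP k)]
    have h2 : (upP k ((gray (m+1)).getLast (gray_ne_nil _), (gray (m+1)).head (gray_ne_nil _))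
        : Bool) = false := by
      simp only [upP, hlast, hhead, decide_eq_false_iff_not]
      omega
    rw [h2]
    have := (up_dn_gray m k).1
    simp only [up] at this
    simp [this]
  · rw [card_filter_eq_countP]
    have h1 : ((List.finRange (gray (m+1)).length).countP
        (fun i => decide (((gray (m+1)).get i).count true = k ∧
          ((gray (m+1)).get ⟨((i : ℕ) + 1) % (gray (m+1)).length,
            Nat.mod_lt _ i.pos⟩).count true + 1 = k)))
        = ((List.finRange (gray (m+1)).length).countP
          (fun i => dnP k ((gray (m+1)).get i,
            (gray (m+1)).get ⟨((i : ℕ) + 1) % (gray (m+1)).length,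
              Nat.mod_lt _ (List.length_pos_iff.mpr (gray_ne_nil _))⟩))) := by
      apply List.countP_congr
      intro i _
      simp [dnP]
    rw [h1, bridge m (dnP k)]
    have h2 : (dnP k ((gray (m+1)).getLast (gray_ne_nil _), (gray (m+1)).head (gray_ne_nil _))
        : Bool) = decide (k = 1) := by
      simp only [dnP, hlast, hhead, decide_eq_decide]
      omega
    rw [h2]
    have := (up_dn_gray m k).2
    simp only [dn] at this
    rw [this]
    match k with
    | 0 => simp
    | 1 => simp
    | (j+2) =>
      have hj1 : ¬(j + 2 ≤ 1) := by omega
      have hj2 : (decide (j + 2 = 1)) = false := by simp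
      rw [if_neg hj1, hj2, if_neg (by omega : ¬(j + 2 = 0))]
      simp
end

section
/- Let x be an upward vertex of weight k (0 < k < n) in the reflected Gray code, and let i be the smallest index with x_i = 1. Then the successor of x in Γ_{n,k} is obtained from x by flipping bits i−1 and i if k is even, and by flipping bits i+1 and i if k is odd; moreover, the common upper neighbor up(x, s(x)) is obtained from x by flipping bit i−1 (k even) or bit i+1 (k odd). -/
set_option linter.unusedVariables false
set_option linter.unnecessarySeqFocus false
set_option linter.unreachableTactic false
set_option linter.unusedTactic false


/-- Flip bit at (1-based) position `j` of the bitstring `x`. -/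
def flipBit (x : List Bool) (j : ℕ) : List Bool := x.set (j - 1) (!(x.getD (j - 1) false))

namespace GrayAux

/-- popcount -/
def pcnt (v : ℕ) : ℕ :=
  if h : v = 0 then 0 else v % 2 + pcnt (v / 2)
decreasing_by exact Nat.div_lt_self (Nat.pos_of_ne_zero h) one_lt_two

@[simp] lemma pcnt_zero : pcnt 0 = 0 := by rw [pcnt]; simp

lemma pcnt_eq (v : ℕ) : pcnt v = v % 2 + pcnt (v / 2) := by
  rcases eq_or_ne v 0 with rfl | h
  · simp
  · rw [pcnt]; simp [h]

@[simp] lemma pcnt_one : pcnt 1 = 1 := by rw [pcnt_eq]; simp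

/-- Gray code value -/
def gv (m : ℕ) : ℕ := m ^^^ (m / 2)

@[simp] lemma gv_zero : gv 0 = 0 := rfl

lemma gv_div_two (m : ℕ) : gv m / 2 = gv (m / 2) := by
  apply Nat.eq_of_testBit_eq
  intro i
  simp [gv, Nat.testBit_div_two, Nat.testBit_xor]

lemma gv_eq_zero {m : ℕ} (h : gv m = 0) : m = 0 := by
  have : m = m / 2 := by
    have := congrArg (fun t => t ^^^ (m / 2)) h
    simp only [gv, Nat.xor_assoc, Nat.xor_self, Nat.xor_zero, Nat.zero_xor] at this
    exact this
  omega

/-- inverse of gray value -/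
def ginv (v : ℕ) : ℕ :=
  if h : v = 0 then 0 else v ^^^ ginv (v / 2)
decreasing_by exact Nat.div_lt_self (Nat.pos_of_ne_zero h) one_lt_two

lemma ginv_gv (m : ℕ) : ginv (gv m) = m := by
  induction m using Nat.strong_induction_on with
  | _ m ih =>
    rcases eq_or_ne m 0 with rfl | hm
    · simp [ginv]
    · have h1 : gv m ≠ 0 := fun h => hm (gv_eq_zero h)
      rw [ginv]
      simp only [h1, dif_neg, not_false_iff]
      rw [gv_div_two, ih (m / 2) (Nat.div_lt_self (Nat.pos_of_ne_zero hm) one_lt_two)]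
      show (m ^^^ m / 2) ^^^ m / 2 = m
      rw [Nat.xor_assoc, Nat.xor_self, Nat.xor_zero]

lemma gv_inj {a b : ℕ} (h : gv a = gv b) : a = b := by
  have := congrArg ginv h
  rwa [ginv_gv, ginv_gv] at this

lemma gv_lt {n m : ℕ} (h : m < 2 ^ n) : gv m < 2 ^ n :=
  Nat.xor_lt_two_pow h (lt_of_le_of_lt (Nat.div_le_self _ _) h)

/-- split lemma for pcnt -/
lemma pcnt_split (s : ℕ) : ∀ a b, b < 2 ^ s → pcnt (a * 2 ^ s + b) = pcnt a + pcnt b := by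
  induction s with
  | zero => intro a b hb; interval_cases b; simp
  | succ s ih =>
    intro a b hb
    have hpow : 2 ^ (s+1) = 2 * 2 ^ s := by ring
    have hA : a * 2 ^ (s+1) + b = 2 * (a * 2 ^ s) + b := by rw [hpow]; ring
    rw [pcnt_eq (a * 2 ^ (s+1) + b), hA]
    have h1 : (2 * (a * 2 ^ s) + b) % 2 = b % 2 := by omega
    have h2 : (2 * (a * 2 ^ s) + b) / 2 = a * 2 ^ s + b / 2 := by omega
    rw [h1, h2, ih a (b / 2) (by omega)]
    rw [pcnt_eq b]; omega

@[simp] lemma pcnt_two_pow (j : ℕ) : pcnt (2 ^ j) = 1 := by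
  have := pcnt_split j 1 0 (Nat.pow_pos (by norm_num))
  simpa using this

lemma pcnt_pos {v : ℕ} (h : v ≠ 0) : 0 < pcnt v := by
  induction v using Nat.strong_induction_on with
  | _ v ih =>
    rw [pcnt_eq]
    rcases Nat.even_or_odd v with he | ho
    · have : v / 2 ≠ 0 := by rcases he with ⟨c, hc⟩; omega
      have := ih (v / 2) (Nat.div_lt_self (Nat.pos_of_ne_zero h) one_lt_two) this
      omega
    · have : v % 2 = 1 := Nat.odd_iff.mp ho
      omega

lemma pcnt_xor_parity (a : ℕ) : ∀ b, pcnt (a ^^^ b) % 2 = (pcnt a + pcnt b) % 2 := by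
  induction a using Nat.strong_induction_on with
  | _ a ih =>
    intro b
    rcases eq_or_ne a 0 with rfl | ha
    · simp
    · rw [pcnt_eq (a ^^^ b), pcnt_eq a, pcnt_eq b]
      have hd : (a ^^^ b) / 2 = a / 2 ^^^ b / 2 := by
        apply Nat.eq_of_testBit_eq
        intro i
        simp [Nat.testBit_div_two, Nat.testBit_xor]
      have hm : (a ^^^ b) % 2 = (a % 2 + b % 2) % 2 := by
        rw [Nat.xor_mod_two_eq]; omega
      have IH := ih (a / 2) (Nat.div_lt_self (Nat.pos_of_ne_zero ha) one_lt_two) (b / 2)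
      rw [hd, hm]
      omega

lemma pcnt_gv_parity (m : ℕ) : pcnt (gv m) % 2 = m % 2 := by
  unfold gv
  rw [pcnt_xor_parity]
  conv_lhs => rw [pcnt_eq m]
  omega



lemma testBit_gv (m i : ℕ) : (gv m).testBit i = ((m.testBit i).xor (m.testBit (i+1))) := by
  simp [gv, Nat.testBit_xor, Nat.testBit_div_two]

lemma testBit_mulAdd (a : ℕ) {b s : ℕ} (hb : b < 2 ^ s) (j : ℕ) :
    (a * 2 ^ s + b).testBit j = if j < s then b.testBit j else a.testBit (j - s) := by
  rw [Nat.mul_comm]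
  exact Nat.testBit_two_pow_mul_add a hb j

lemma testBit_high_false {u s i : ℕ} (hu : u < 2 ^ s) (hi : s ≤ i) : u.testBit i = false :=
  Nat.testBit_lt_two_pow (lt_of_lt_of_le hu (Nat.pow_le_pow_right (by norm_num) hi))

lemma two_pow_add_two_pow {l j : ℕ} (h : l < j) (i : ℕ) :
    (2 ^ j + 2 ^ l).testBit i = (decide (i = j) || decide (i = l)) := by
  have he : 2 ^ j + 2 ^ l = 2 ^ (j - l - 1) * 2 ^ (l + 1) + 2 ^ l := by
    rw [← pow_add]
    congr 2
    omega
  have hl : (2:ℕ) ^ l < 2 ^ (l + 1) := Nat.pow_lt_pow_right one_lt_two (by omega)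
  rw [he, testBit_mulAdd _ hl]
  by_cases hi : i < l + 1
  · rw [if_pos hi, Nat.testBit_two_pow]
    by_cases h2 : i = l
    · simp [h2]
    · have h3 : ¬ (l = i) := fun hh => h2 hh.symm
      have h4 : ¬ (i = j) := by omega
      simp [h2, h3, h4]
  · rw [if_neg hi, Nat.testBit_two_pow]
    by_cases h2 : i = j
    · have : j - l - 1 = i - (l + 1) := by omega
      simp [h2, this]
    · have h3 : ¬ (j - l - 1 = i - (l + 1)) := by omega
      have h4 : ¬ (i = l) := by omega
      simp [h2, h3, h4]

/-- xor a low value into a number of the form `h * 2^s + A`. -/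
lemma xor_low {s h A B : ℕ} (hA : A < 2 ^ s) (hB : B < 2 ^ s) :
    (h * 2 ^ s + A) ^^^ B = h * 2 ^ s + (A ^^^ B) := by
  apply Nat.eq_of_testBit_eq
  intro i
  rw [Nat.testBit_xor, testBit_mulAdd _ hA, testBit_mulAdd _ (Nat.xor_lt_two_pow hA hB)]
  by_cases hi : i < s
  · simp [hi, Nat.testBit_xor]
  · have hBi : B.testBit i = false := testBit_high_false hB (by omega)
    simp [hi, hBi]

lemma or_low {s h A B : ℕ} (hA : A < 2 ^ s) (hB : B < 2 ^ s) :
    (h * 2 ^ s + A) ||| (h * 2 ^ s + B) = h * 2 ^ s + (A ||| B) := by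
  apply Nat.eq_of_testBit_eq
  intro i
  rw [Nat.testBit_or, testBit_mulAdd _ hA, testBit_mulAdd _ hB,
    testBit_mulAdd _ (Nat.or_lt_two_pow hA hB)]
  by_cases hi : i < s
  · simp [hi, Nat.testBit_or]
  · simp [hi]

lemma xor_two_pow_of_lt {s u : ℕ} (hu : u < 2 ^ s) : u ^^^ 2 ^ s = 2 ^ s + u := by
  have h1 : 2 ^ s + u = 1 * 2 ^ s + u := by ring
  rw [h1]
  apply Nat.eq_of_testBit_eq
  intro i
  rw [Nat.testBit_xor, testBit_mulAdd _ hu, Nat.testBit_two_pow]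
  by_cases hi : i < s
  · have : ¬ (s = i) := by omega
    simp [hi, this]
  · by_cases h2 : i = s
    · subst h2
      have : u.testBit i = false := testBit_high_false hu (by omega)
      simp [this, hi]
    · have h3 : ¬ (s = i) := fun hh => h2 hh.symm
      have h4 : u.testBit i = false := testBit_high_false hu (by omega)
      have h5 : Nat.testBit 1 (i - s) = false := by
        have : (1:ℕ) < 2 ^ 1 := by norm_num
        exact testBit_high_false this (by omega)
      simp [hi, h3, h4, h5]

lemma two_pow_add_xor_self {s u : ℕ} (hu : u < 2 ^ s) : (2 ^ s + u) ^^^ 2 ^ s = u := by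
  rw [← xor_two_pow_of_lt hu, Nat.xor_assoc, Nat.xor_self, Nat.xor_zero]

lemma two_pow_xor_two_pow {l j : ℕ} (h : l < j) : 2 ^ j ^^^ 2 ^ l = 2 ^ j + 2 ^ l := by
  rw [Nat.xor_comm]
  exact xor_two_pow_of_lt (Nat.pow_lt_pow_right one_lt_two h)

lemma decide_comm {a b : ℕ} : decide (a = b) = decide (b = a) := by
  by_cases h : a = b
  · simp [h]
  · have h2 : ¬ b = a := fun hh => h hh.symm
    simp [h, h2]

lemma two_pow_or_two_pow {l j : ℕ} (h : l ≠ j) : 2 ^ j ||| 2 ^ l = 2 ^ j + 2 ^ l := by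
  apply Nat.eq_of_testBit_eq
  intro i
  rcases Nat.lt_or_ge l j with hlt | hge
  · rw [Nat.testBit_or, two_pow_add_two_pow hlt, Nat.testBit_two_pow, Nat.testBit_two_pow]
    by_cases h1 : i = j <;> by_cases h2 : i = l <;>
      simp [decide_comm, h1, h2] <;> try omega
  · have hlt : j < l := by omega
    rw [Nat.testBit_or, Nat.add_comm, two_pow_add_two_pow hlt, Nat.testBit_two_pow,
      Nat.testBit_two_pow]
    by_cases h1 : i = j <;> by_cases h2 : i = l <;>
      simp [decide_comm, h1, h2] <;> try omega

/-- the key splitting identity for the Gray value function -/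
lemma gv_mulAdd {s : ℕ} (hs : 1 ≤ s) (c b : ℕ) (hb : b < 2 ^ s) :
    gv (c * 2 ^ s + b) = gv c * 2 ^ s + (gv b ^^^ (c % 2) * 2 ^ (s - 1)) := by
  have hlow2 : (c % 2) * 2 ^ (s-1) < 2 ^ s := by
    have h2 : (2:ℕ) ^ (s-1) < 2 ^ s := Nat.pow_lt_pow_right one_lt_two (by omega)
    have h3 : c % 2 ≤ 1 := by omega
    calc (c % 2) * 2 ^ (s-1) ≤ 1 * 2 ^ (s-1) := Nat.mul_le_mul_right _ h3
    _ < 2 ^ s := by omega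
  have hlow : gv b ^^^ (c % 2) * 2 ^ (s-1) < 2 ^ s := Nat.xor_lt_two_pow (gv_lt hb) hlow2
  apply Nat.eq_of_testBit_eq
  intro i
  have e1 : (c * 2 ^ s + b).testBit i = if i < s then b.testBit i else c.testBit (i - s) :=
    testBit_mulAdd _ hb i
  have e2 : (c * 2 ^ s + b).testBit (i+1) =
      if i + 1 < s then b.testBit (i+1) else c.testBit (i + 1 - s) := testBit_mulAdd _ hb (i+1)
  have e3 : (gv c * 2 ^ s + (gv b ^^^ (c % 2) * 2 ^ (s - 1))).testBit i =
      if i < s then (gv b ^^^ (c % 2) * 2 ^ (s-1)).testBit i else (gv c).testBit (i - s) :=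
    testBit_mulAdd _ hlow i
  rw [testBit_gv, e1, e2, e3]
  have htc0 : c.testBit 0 = decide (c % 2 = 1) := Nat.testBit_zero c
  have hmod : ∀ j, ((c % 2) * 2 ^ (s-1)).testBit j = (decide (c % 2 = 1) && decide (j = s - 1)) := by
    intro j
    rcases Nat.mod_two_eq_zero_or_one c with hc | hc
    · simp [hc]
    · rw [hc, one_mul, Nat.testBit_two_pow]
      simp [decide_comm]
  rcases Nat.lt_trichotomy i (s - 1) with hi | hi | hi
  · rw [if_pos (by omega), if_pos (by omega), if_pos (by omega), Nat.testBit_xor, testBit_gv,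
      hmod i]
    have : ¬ (i = s - 1) := by omega
    simp [this]
  · subst hi
    rw [if_pos (by omega), if_neg (by omega), if_pos (by omega), Nat.testBit_xor, testBit_gv,
      hmod (s-1)]
    have h3 : s - 1 + 1 - s = 0 := by omega
    have hbs : b.testBit (s - 1 + 1) = false := testBit_high_false hb (by omega)
    rw [h3, hbs, htc0]
    simp
  · rw [if_neg (by omega), if_neg (by omega), if_neg (by omega), testBit_gv]
    have h4 : i + 1 - s = i - s + 1 := by omega
    rw [h4]

lemma gv_one : gv 1 = 1 := by decide
lemma gv_two_pow {j : ℕ} (hj : 1 ≤ j) : gv (2 ^ j) = 2 ^ j + 2 ^ (j - 1) := by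
  have hd : 2 ^ j / 2 = 2 ^ (j - 1) := by
    have : (2:ℕ) ^ j = 2 * 2 ^ (j-1) := by
      rw [← pow_succ']
      congr 1
      omega
    omega
  rw [gv, hd, two_pow_xor_two_pow (by omega)]

lemma gv_two_pow_sub_one {j : ℕ} (hj : 1 ≤ j) : gv (2 ^ j - 1) = 2 ^ (j - 1) := by
  have hd : (2 ^ j - 1) / 2 = 2 ^ (j - 1) - 1 := by
    have : (2:ℕ) ^ j = 2 * 2 ^ (j-1) := by
      rw [← pow_succ']; congr 1; omega
    omega
  rw [gv, hd]
  apply Nat.eq_of_testBit_eq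
  intro i
  rw [Nat.testBit_xor, Nat.testBit_two_pow_sub_one, Nat.testBit_two_pow_sub_one,
    Nat.testBit_two_pow]
  by_cases h1 : i < j - 1 <;> by_cases h2 : i < j <;> by_cases h3 : j - 1 = i <;>
    simp [h1, h2, h3] <;> omega


/-! ### bits and the Gray list -/

def bits (n v : ℕ) : List Bool := (List.range n).map v.testBit

@[simp] lemma length_bits (n v : ℕ) : (bits n v).length = n := by simp [bits]

lemma getElem_bits {n v j : ℕ} (h : j < n) (h' : j < (bits n v).length) :
    (bits n v)[j] = v.testBit j := by
  simp [bits]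

lemma bits_append (n v : ℕ) : bits (n+1) v = bits n v ++ [v.testBit n] := by
  simp [bits, List.range_succ]

lemma bits_cons (n v : ℕ) : bits (n+1) v = v.testBit 0 :: bits n (v / 2) := by
  simp only [bits, List.range_succ_eq_map, List.map_cons, List.map_map]
  congr 1
  apply List.map_congr_left
  intro j _
  simp [Nat.testBit_div_two]

lemma bits_congr {n v w : ℕ} (h : ∀ i < n, v.testBit i = w.testBit i) : bits n v = bits n w := by
  unfold bits
  apply List.map_congr_left
  intro j hj
  exact h j (List.mem_range.mp hj)

lemma bits_inj {n v w : ℕ} (hv : v < 2 ^ n) (hw : w < 2 ^ n) (h : bits n v = bits n w) : v = w := by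
  apply Nat.eq_of_testBit_eq
  intro i
  by_cases hi : i < n
  · have h2 := congrArg (fun l => l[i]?) h
    simp only [bits, List.getElem?_map] at h2
    rw [List.getElem?_range hi] at h2
    simpa using h2
  · rw [testBit_high_false hv (by omega), testBit_high_false hw (by omega)]

lemma gv_reflect {n v : ℕ} (hv : v < 2 ^ (n+1)) :
    gv (2 ^ (n+1) - 1 - v) = gv v ^^^ 2 ^ n := by
  have hsub : ∀ i, (2 ^ (n+1) - 1 - v).testBit i = (decide (i < n+1) && !(v.testBit i)) := by
    intro i
    have : 2 ^ (n+1) - 1 - v = 2 ^ (n+1) - (v + 1) := by omega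
    rw [this]
    exact Nat.testBit_two_pow_sub_succ hv i
  apply Nat.eq_of_testBit_eq
  intro i
  rw [testBit_gv, hsub i, hsub (i+1), Nat.testBit_xor, testBit_gv, Nat.testBit_two_pow]
  rcases Nat.lt_trichotomy i n with hi | rfl | hi
  · have h1 : i < n + 1 := by omega
    have h2 : i + 1 < n + 1 := by omega
    have h3 : ¬ (n = i) := by omega
    simp [h1, h2, h3] <;> (cases v.testBit i <;> cases v.testBit (i+1) <;> rfl)
  · have hv1 : v.testBit (i+1) = false := testBit_high_false hv (by omega)
    simp [hv1]
  · have h1 : ¬ (i < n + 1) := by omega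
    have h2 : ¬ (i + 1 < n + 1) := by omega
    have h3 : ¬ (n = i) := by omega
    have hv1 : v.testBit i = false := testBit_high_false hv (by omega)
    have hv2 : v.testBit (i+1) = false := testBit_high_false hv (by omega)
    simp [h1, h2, h3, hv1, hv2]

lemma gray_eq (n : ℕ) : gray n = (List.range (2 ^ n)).map (fun m => bits n (gv m)) := by
  induction n with
  | zero => simp [gray, bits]
  | succ n ih =>
    have hpow : (2:ℕ) ^ (n+1) = 2 ^ n + 2 ^ n := by ring
    rw [gray, ih, hpow, List.range_add, List.map_append]
    congr 1
    · rw [List.map_map]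
      apply List.map_congr_left
      intro m hm
      have hm' : m < 2 ^ n := List.mem_range.mp hm
      have : (gv m).testBit n = false := Nat.testBit_lt_two_pow (gv_lt hm')
      simp only [Function.comp_apply, bits_append, this]
    · rw [← List.map_reverse, List.map_map, List.map_map, List.range_eq_range',
        List.reverse_range', List.map_map]
      simp only [← List.range_eq_range']
      apply List.map_congr_left
      intro j hj
      have hj' : j < 2 ^ n := List.mem_range.mp hj
      simp only [Function.comp_apply]
      have harg : 0 + 2 ^ n - 1 - j = 2 ^ n - 1 - j := by omega
      rw [harg]
      -- goal : bits n (gv (2^n - 1 - j)) ++ [true] = bits (n+1) (gv (2^n + j))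
      have hv : 2 ^ n + j < 2 ^ (n+1) := by omega
      have hrefl : gv (2 ^ n - 1 - j) = gv (2 ^ n + j) ^^^ 2 ^ n := by
        have : 2 ^ (n+1) - 1 - (2 ^ n + j) = 2 ^ n - 1 - j := by omega
        rw [← this]
        exact gv_reflect hv
      have hlow : gv (2 ^ n - 1 - j) < 2 ^ n := gv_lt (by omega)
      have htop : (gv (2 ^ n + j)).testBit n = true := by
        have h1 : (gv (2 ^ n + j) ^^^ 2 ^ n).testBit n = false := by
          rw [← hrefl]; exact Nat.testBit_lt_two_pow hlow
        rw [Nat.testBit_xor, Nat.testBit_two_pow] at h1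
        simp at h1
        cases h : (gv (2 ^ n + j)).testBit n
        · rw [h] at h1; simp at h1
        · rfl
      rw [bits_append, htop]
      congr 1
      apply bits_congr
      intro i hi
      rw [hrefl, Nat.testBit_xor, Nat.testBit_two_pow]
      have : ¬ (n = i) := by omega
      simp [this]

lemma length_gray (n : ℕ) : (gray n).length = 2 ^ n := by rw [gray_eq]; simp

lemma gray_getElem {n m : ℕ} (h : m < 2 ^ n) (h' : m < (gray n).length) :
    (gray n)[m] = bits n (gv m) := by
  simp only [gray_eq]
  simp [h]

lemma nodup_gray (n : ℕ) : (gray n).Nodup := by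
  rw [gray_eq]
  apply List.Nodup.map_on _ List.nodup_range
  intro a ha b hb hab
  exact gv_inj (bits_inj (gv_lt (List.mem_range.mp ha)) (gv_lt (List.mem_range.mp hb)) hab)

lemma count_bits : ∀ n v, v < 2 ^ n → (bits n v).count true = pcnt v := by
  intro n
  induction n with
  | zero =>
    intro v hv
    interval_cases v
    simp [bits]
  | succ n ih =>
    intro v hv
    rw [bits_cons, List.count_cons, ih (v / 2) (by
      have : (2:ℕ) ^ (n+1) = 2 * 2 ^ n := by ring
      omega)]
    rw [pcnt_eq v, Nat.testBit_zero]
    rcases Nat.mod_two_eq_zero_or_one v with h | h <;> simp [h] <;> omega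

lemma indexOf_bits : ∀ n v L, L < n → v.testBit L = true → (∀ j < L, v.testBit j = false) →
    (bits n v).idxOf true = L := by
  intro n
  induction n with
  | zero => intro v L hL; omega
  | succ n ih =>
    intro v L hL h1 h0
    rw [bits_cons]
    cases L with
    | zero =>
      rw [h1]
      exact List.idxOf_cons_self
    | succ L =>
      have hv0 : v.testBit 0 = false := h0 0 (by omega)
      rw [hv0, List.idxOf_cons_ne _ (by simp)]
      have := ih (v / 2) L (by omega) (by rw [Nat.testBit_div_two]; exact h1)
        (fun j hj => by rw [Nat.testBit_div_two]; exact h0 (j+1) (by omega))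
      omega

lemma flipBit_bits {n v j : ℕ} (hj : j < n) :
    flipBit (bits n v) (j + 1) = bits n (v ^^^ 2 ^ j) := by
  unfold flipBit
  have hlen : j < (bits n v).length := by simpa using hj
  have hgd : (bits n v).getD j false = v.testBit j := by
    rw [List.getD_eq_getElem _ _ hlen]
    exact getElem_bits hj hlen
  rw [Nat.add_sub_cancel, hgd]
  apply List.ext_getElem
  · simp
  · intro i hi1 hi2
    have hin : i < n := by simpa using hi2
    rw [List.getElem_set, getElem_bits hin, getElem_bits hin, Nat.testBit_xor,
      Nat.testBit_two_pow]
    by_cases h : j = i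
    · subst h
      simp
    · simp [h]

lemma zipWith_or_bits (n v w : ℕ) :
    List.zipWith (· || ·) (bits n v) (bits n w) = bits n (v ||| w) := by
  apply List.ext_getElem
  · simp
  · intro i hi1 hi2
    have hin : i < n := by simpa using hi2
    rw [List.getElem_zipWith, getElem_bits hin, getElem_bits hin, getElem_bits hin,
      Nat.testBit_or]

/-! ### successor extraction from a filtered list -/

lemma filter_succ_aux {α : Type} (G : List α) (P : α → Bool) (m d : ℕ)
    (hd : 0 < d) (hmd : m + d < G.length)
    (hPm : P (G[m]'(by omega)) = true) (hPmd : P (G[m+d]'hmd) = true)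
    (hmid : ∀ j (hj : j < G.length), m < j → j < m + d → P (G[j]'hj) = false) :
    ∃ t : ℕ, (G.filter P)[t]? = some (G[m]'(by omega)) ∧
      (G.filter P)[t+1]? = some (G[m+d]'hmd) := by
  have hm : m < G.length := by omega
  set A := (G.take m).filter P with hA
  set M := (G.drop (m+1)).take (d - 1) with hM
  set B := G.drop (m+d+1) with hB
  have e1 : G = G.take m ++ G[m] :: (M ++ G[m+d] :: B) := by
    conv_lhs => rw [← List.take_append_drop m G]
    congr 1
    rw [List.drop_eq_getElem_cons hm]
    congr 1
    conv_lhs => rw [← List.take_append_drop (d-1) (G.drop (m+1))]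
    congr 1
    rw [List.drop_drop]
    have h2 : m + 1 + (d - 1) = m + d := by omega
    rw [h2, List.drop_eq_getElem_cons hmd]
  have hMnil : M.filter P = [] := by
    rw [List.filter_eq_nil_iff]
    intro y hy
    rw [List.mem_iff_getElem] at hy
    obtain ⟨i, hi, rfl⟩ := hy
    have hiM : i < d - 1 := by
      have := hi
      simp only [hM, List.length_take, List.length_drop] at this
      omega
    have hgi : M[i]'hi = G[m+1+i]'(by omega) := by
      simp only [hM]
      rw [List.getElem_take]
      exact List.getElem_drop
    rw [hgi]
    simp only [Bool.not_eq_true]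
    exact hmid (m+1+i) (by omega) (by omega) (by omega)
  have key : G.filter P = A ++ G[m] :: G[m+d] :: B.filter P := by
    conv_lhs => rw [e1]
    rw [List.filter_append, List.filter_cons_of_pos hPm, List.filter_append, hMnil,
      List.nil_append, List.filter_cons_of_pos hPmd]
  refine ⟨A.length, ?_, ?_⟩
  · rw [key, List.getElem?_append_right (le_refl _), Nat.sub_self]
    rfl
  · rw [key, List.getElem?_append_right (by omega)]
    have : A.length + 1 - A.length = 1 := by omega
    rw [this]
    simp

/-! ### numeric structure of the even and odd cases -/

lemma pcnt_two_mul (g : ℕ) : pcnt (2 * g) = pcnt g := by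
  rw [pcnt_eq (2 * g)]
  have h1 : (2 * g) % 2 = 0 := by omega
  have h2 : (2 * g) / 2 = g := by omega
  rw [h1, h2]
  omega

lemma pcnt_two_mul_add_one (g : ℕ) : pcnt (2 * g + 1) = 1 + pcnt g := by
  rw [pcnt_eq (2 * g + 1)]
  have h1 : (2 * g + 1) % 2 = 1 := by omega
  have h2 : (2 * g + 1) / 2 = g := by omega
  rw [h1, h2]

lemma even_form {L : ℕ} (hL : 1 ≤ L) (c j : ℕ) (hj : j ≤ 2 ^ L) :
    gv (c * 2 ^ (L+2) + 2 ^ (L+1) + j)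
      = (2 * gv c + (1 - c % 2)) * 2 ^ (L+1) + (gv j ^^^ 2 ^ L) ∧
    pcnt (gv (c * 2 ^ (L+2) + 2 ^ (L+1) + j))
      = pcnt (gv c) + (1 - c % 2) + pcnt (gv j ^^^ 2 ^ L) := by
  have hp1 : (2:ℕ) ^ (L+1) = 2 * 2 ^ L := by ring
  have hp2 : (2:ℕ) ^ (L+2) = 2 * 2 ^ (L+1) := by ring
  have hpos : (0:ℕ) < 2 ^ L := Nat.pow_pos (by norm_num)
  have hjlt : j < 2 ^ (L+1) := by omega
  have hb : 2 ^ (L+1) + j < 2 ^ (L+2) := by omega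
  have e0 : c * 2 ^ (L+2) + 2 ^ (L+1) + j = c * 2 ^ (L+2) + (2 ^ (L+1) + j) := by ring
  have e1 : (2:ℕ) ^ (L+1) + j = 1 * 2 ^ (L+1) + j := by ring
  have hu : gv j ^^^ 2 ^ L < 2 ^ (L+1) := Nat.xor_lt_two_pow (gv_lt hjlt) (by omega)
  have hgb : gv (2 ^ (L+1) + j) = 2 ^ (L+1) + (gv j ^^^ 2 ^ L) := by
    conv_lhs => rw [e1]
    rw [gv_mulAdd (by omega) 1 j hjlt, gv_one, one_mul]
    simp only [Nat.add_sub_cancel]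
    norm_num
  rw [e0, gv_mulAdd (by omega) c _ hb]
  simp only [show L + 2 - 1 = L + 1 from rfl]
  rw [hgb]
  set u := gv j ^^^ 2 ^ L with hudef
  rcases Nat.mod_two_eq_zero_or_one c with hc | hc
  · rw [hc, zero_mul, Nat.xor_zero]
    have he : gv c * 2 ^ (L+2) + (2 ^ (L+1) + u) = (2 * gv c + (1 - 0)) * 2 ^ (L+1) + u := by
      rw [hp2]; ring
    rw [he]
    refine ⟨rfl, ?_⟩
    rw [pcnt_split _ _ _ hu]
    have : 2 * gv c + (1 - 0) = 2 * gv c + 1 := by norm_num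
    rw [this, pcnt_two_mul_add_one]
    omega
  · rw [hc, one_mul, two_pow_add_xor_self hu]
    have he : gv c * 2 ^ (L+2) + u = (2 * gv c + (1 - 1)) * 2 ^ (L+1) + u := by
      rw [hp2]; ring
    rw [he]
    refine ⟨rfl, ?_⟩
    rw [pcnt_split _ _ _ hu]
    have : 2 * gv c + (1 - 1) = 2 * gv c := by norm_num
    rw [this, pcnt_two_mul]
    omega

lemma even_pack {L c m : ℕ} (hL : 1 ≤ L) (hm : m = c * 2 ^ (L+2) + 2 ^ (L+1)) :
    (∀ j, 0 < j → j < 2 ^ L → pcnt (gv m) < pcnt (gv (m + j))) ∧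
    pcnt (gv (m + 2 ^ L)) = pcnt (gv m) ∧
    gv (m + 2 ^ L) = gv m ^^^ 2 ^ L ^^^ 2 ^ (L-1) ∧
    gv m ||| gv (m + 2 ^ L) = gv m ^^^ 2 ^ (L-1) := by
  subst hm
  set H := 2 * gv c + (1 - c % 2) with hH
  have hpos : (0:ℕ) < 2 ^ (L-1) := Nat.pow_pos (by norm_num)
  have hp0 : (2:ℕ) ^ L = 2 * 2 ^ (L-1) := by
    rw [← pow_succ']
    congr 1
    omega
  have hp1 : (2:ℕ) ^ (L+1) = 2 * 2 ^ L := by ring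
  obtain ⟨hv0, hp0'⟩ := even_form hL c 0 (by omega)
  rw [add_zero] at hv0 hp0'
  rw [gv_zero, Nat.zero_xor] at hv0 hp0'
  rw [pcnt_two_pow] at hp0'
  obtain ⟨hvd, hpd⟩ := even_form hL c (2 ^ L) le_rfl
  rw [gv_two_pow hL, two_pow_add_xor_self (by omega)] at hvd hpd
  rw [pcnt_two_pow] at hpd
  have hA : (2:ℕ) ^ L < 2 ^ (L+1) := by omega
  have hB : (2:ℕ) ^ (L-1) < 2 ^ (L+1) := by omega
  refine ⟨?_, ?_, ?_, ?_⟩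
  · intro j hj0 hjd
    obtain ⟨_, hpj⟩ := even_form hL c j (by omega)
    rw [hpj, hp0']
    have hgj : gv j < 2 ^ L := gv_lt hjd
    have hgj0 : gv j ≠ 0 := fun h => hj0.ne' (gv_eq_zero h)
    rw [Nat.xor_comm (gv j), Nat.xor_comm, xor_two_pow_of_lt hgj]
    have : (2:ℕ) ^ L + gv j = 1 * 2 ^ L + gv j := by ring
    rw [this, pcnt_split _ _ _ hgj, pcnt_one]
    have := pcnt_pos hgj0
    omega
  · rw [hpd, hp0']
  · rw [hvd, hv0, xor_low hA hA, Nat.xor_self, xor_low (by omega) hB, Nat.zero_xor]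
  · rw [hvd, hv0, or_low hA hB, xor_low hA hB,
      two_pow_or_two_pow (show L - 1 ≠ L by omega),
      two_pow_xor_two_pow (show L - 1 < L by omega)]

lemma odd_form (L c j : ℕ) (hj : j ≤ 2 ^ (L+1)) :
    gv (c * 2 ^ (L+3) + (2 ^ (L+1) - 1) + j)
      = (2 * gv c + c % 2) * 2 ^ (L+2) + gv (2 ^ (L+1) - 1 + j) ∧
    pcnt (gv (c * 2 ^ (L+3) + (2 ^ (L+1) - 1) + j))
      = pcnt (gv c) + c % 2 + pcnt (gv (2 ^ (L+1) - 1 + j)) := by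
  have hp1 : (2:ℕ) ^ (L+1) = 2 * 2 ^ L := by ring
  have hp2 : (2:ℕ) ^ (L+2) = 2 * 2 ^ (L+1) := by ring
  have hp3 : (2:ℕ) ^ (L+3) = 2 * 2 ^ (L+2) := by ring
  have hpos : (0:ℕ) < 2 ^ L := Nat.pow_pos (by norm_num)
  have hb : 2 ^ (L+1) - 1 + j < 2 ^ (L+3) := by omega
  have hb2 : 2 ^ (L+1) - 1 + j < 2 ^ (L+2) := by omega
  have e0 : c * 2 ^ (L+3) + (2 ^ (L+1) - 1) + j = c * 2 ^ (L+3) + (2 ^ (L+1) - 1 + j) := by ring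
  rw [e0, gv_mulAdd (by omega) c _ hb]
  simp only [show L + 3 - 1 = L + 2 from rfl]
  have hgb : gv (2 ^ (L+1) - 1 + j) < 2 ^ (L+2) := gv_lt hb2
  rcases Nat.mod_two_eq_zero_or_one c with hc | hc
  · rw [hc, zero_mul, Nat.xor_zero]
    have he : gv c * 2 ^ (L+3) + gv (2 ^ (L+1) - 1 + j)
        = (2 * gv c + 0) * 2 ^ (L+2) + gv (2 ^ (L+1) - 1 + j) := by rw [hp3]; ring
    rw [he]
    refine ⟨rfl, ?_⟩
    rw [pcnt_split _ _ _ hgb, add_zero, pcnt_two_mul]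
    omega
  · rw [hc, one_mul, xor_two_pow_of_lt hgb]
    have he : gv c * 2 ^ (L+3) + (2 ^ (L+2) + gv (2 ^ (L+1) - 1 + j))
        = (2 * gv c + 1) * 2 ^ (L+2) + gv (2 ^ (L+1) - 1 + j) := by rw [hp3]; ring
    rw [he]
    refine ⟨rfl, ?_⟩
    rw [pcnt_split _ _ _ hgb, pcnt_two_mul_add_one]
    omega

lemma odd_pack {L c m : ℕ} (hm : m = c * 2 ^ (L+3) + (2 ^ (L+1) - 1)) :
    (∀ j, 0 < j → j < 2 ^ (L+1) → pcnt (gv m) < pcnt (gv (m + j))) ∧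
    pcnt (gv (m + 2 ^ (L+1))) = pcnt (gv m) ∧
    gv (m + 2 ^ (L+1)) = gv m ^^^ 2 ^ L ^^^ 2 ^ (L+1) ∧
    gv m ||| gv (m + 2 ^ (L+1)) = gv m ^^^ 2 ^ (L+1) := by
  subst hm
  have hp1 : (2:ℕ) ^ (L+1) = 2 * 2 ^ L := by ring
  have hp2 : (2:ℕ) ^ (L+2) = 2 * 2 ^ (L+1) := by ring
  have hpos : (0:ℕ) < 2 ^ L := Nat.pow_pos (by norm_num)
  obtain ⟨hv0, hp0'⟩ := odd_form L c 0 (by omega)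
  simp only [add_zero] at hv0 hp0'
  have hgv1 : gv (2 ^ (L+1) - 1) = 2 ^ L := by
    have h := gv_two_pow_sub_one (j := L+1) (by omega)
    rwa [Nat.add_sub_cancel] at h
  rw [hgv1] at hv0
  rw [hgv1, pcnt_two_pow] at hp0'
  obtain ⟨hvd, hpd⟩ := odd_form L c (2 ^ (L+1)) le_rfl
  have hsum : 2 ^ (L+1) - 1 + 2 ^ (L+1) = 2 ^ (L+2) - 1 := by omega
  rw [hsum] at hvd hpd
  have hgv2 : gv (2 ^ (L+2) - 1) = 2 ^ (L+1) := by
    have h := gv_two_pow_sub_one (j := L+2) (by omega)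
    have h2 : L + 2 - 1 = L + 1 := by omega
    rwa [h2] at h
  rw [hgv2] at hvd
  rw [hgv2, pcnt_two_pow] at hpd
  have hA : (2:ℕ) ^ L < 2 ^ (L+2) := by omega
  have hB : (2:ℕ) ^ (L+1) < 2 ^ (L+2) := by omega
  refine ⟨?_, ?_, ?_, ?_⟩
  · intro j hj0 hjd
    obtain ⟨_, hpj⟩ := odd_form L c j (by omega)
    rw [hpj, hp0']
    have hbj : 2 ^ (L+1) - 1 + j = 1 * 2 ^ (L+1) + (j - 1) := by omega
    rw [hbj, gv_mulAdd (by omega) 1 (j-1) (by omega), gv_one, one_mul]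
    simp only [Nat.add_sub_cancel, show (1:ℕ) % 2 = 1 from rfl, one_mul]
    have hxne : gv (j-1) ^^^ 2 ^ L ≠ 0 := by
      intro h
      have heq : gv (j - 1) = 2 ^ L := by
        have := congrArg (fun t => t ^^^ 2 ^ L) h
        simp only [Nat.xor_assoc, Nat.xor_self, Nat.xor_zero, Nat.zero_xor] at this
        exact this
      rw [← hgv1] at heq
      have := gv_inj heq
      omega
    have hxlt : gv (j-1) ^^^ 2 ^ L < 2 ^ (L+1) := Nat.xor_lt_two_pow (gv_lt (by omega)) (by omega)
    have he : (2:ℕ) ^ (L+1) + (gv (j-1) ^^^ 2 ^ L) = 1 * 2 ^ (L+1) + (gv (j-1) ^^^ 2 ^ L) := by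
      ring
    rw [he, pcnt_split _ _ _ hxlt, pcnt_one]
    have := pcnt_pos hxne
    omega
  · rw [hpd, hp0']
  · rw [hvd, hv0, xor_low hA hA, Nat.xor_self, xor_low (by omega) hB, Nat.zero_xor]
  · rw [hvd, hv0, or_low hA hB, xor_low hA hB,
      two_pow_or_two_pow (show L + 1 ≠ L by omega), Nat.xor_comm,
      two_pow_xor_two_pow (show L < L + 1 by omega)]
    omega

/-! ### deriving the structure of `m` from the hypotheses -/

lemma pcnt_three : pcnt 3 = 2 := by
  rw [pcnt_eq]
  norm_num [pcnt_one]

lemma struct_even {m L : ℕ} (hm : m % 2 = 0) (hvL : (gv m).testBit L = true)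
    (hlow : ∀ j < L, (gv m).testBit j = false) : m % 2 ^ (L+2) = 2 ^ (L+1) := by
  have hbits : ∀ j, j ≤ L → m.testBit j = false := by
    intro j hj
    induction j with
    | zero =>
      rw [Nat.testBit_zero, hm]
      simp
    | succ j ih =>
      have h1 : m.testBit j = false := ih (by omega)
      have h2 : (gv m).testBit j = false := hlow j (by omega)
      rw [testBit_gv, h1] at h2
      simpa using h2
  have hL1 : m.testBit (L+1) = true := by
    have h := hvL
    rw [testBit_gv, hbits L le_rfl] at h
    simpa using h
  apply Nat.eq_of_testBit_eq
  intro i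
  rw [Nat.testBit_mod_two_pow, Nat.testBit_two_pow]
  by_cases hi : i < L + 2
  · by_cases hiL : i = L + 1
    · subst hiL
      simp [hL1, hi]
    · have h1 : m.testBit i = false := hbits i (by omega)
      have h2 : ¬ (L + 1 = i) := by omega
      simp [hi, h1, h2]
  · have h2 : ¬ (L + 1 = i) := by omega
    simp [hi, h2]

lemma struct_odd {m L : ℕ} (hm : m % 2 = 1) (hvL : (gv m).testBit L = true)
    (hlow : ∀ j < L, (gv m).testBit j = false) : m % 2 ^ (L+2) = 2 ^ (L+1) - 1 := by
  have hbits : ∀ j, j ≤ L → m.testBit j = true := by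
    intro j hj
    induction j with
    | zero =>
      rw [Nat.testBit_zero, hm]
      simp
    | succ j ih =>
      have h1 : m.testBit j = true := ih (by omega)
      have h2 : (gv m).testBit j = false := hlow j (by omega)
      rw [testBit_gv, h1] at h2
      simpa using h2
  have hL1 : m.testBit (L+1) = false := by
    have h := hvL
    rw [testBit_gv, hbits L le_rfl] at h
    simpa using h
  apply Nat.eq_of_testBit_eq
  intro i
  rw [Nat.testBit_mod_two_pow, Nat.testBit_two_pow_sub_one]
  by_cases hi : i < L + 2
  · by_cases hiL : i = L + 1
    · subst hiL
      simp [hL1, hi]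
    · have h1 : m.testBit i = true := hbits i (by omega)
      have h2 : i < L + 1 := by omega
      simp [hi, h1, h2]
  · have h2 : ¬ (i < L + 1) := by omega
    simp [hi, h2]

lemma even_L0_absurd (c : ℕ) (h : pcnt (gv (c * 4 + 2 + 1)) = pcnt (gv (c * 4 + 2)) + 1) :
    False := by
  have e3 := gv_mulAdd (s := 2) (by norm_num) c 3 (by norm_num)
  have e2 := gv_mulAdd (s := 2) (by norm_num) c 2 (by norm_num)
  rw [show c * 4 + 2 + 1 = c * 2 ^ 2 + 3 by ring, show c * 4 + 2 = c * 2 ^ 2 + 2 by ring,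
    e3, e2, show gv 3 = 2 by decide, show gv 2 = 3 by decide] at h
  rcases Nat.mod_two_eq_zero_or_one c with hc | hc <;> rw [hc] at h
  · rw [zero_mul, Nat.xor_zero, Nat.xor_zero,
      pcnt_split 2 _ 2 (by norm_num), pcnt_split 2 _ 3 (by norm_num),
      show (2:ℕ) = 2 ^ 1 by norm_num, pcnt_two_pow, pcnt_three] at h
    omega
  · rw [one_mul, show (2:ℕ) ^ (2-1) = 2 by norm_num, show (2 ^^^ 2 : ℕ) = 0 by decide,
      show (3 ^^^ 2 : ℕ) = 1 by decide,
      pcnt_split 2 _ 0 (by norm_num), pcnt_split 2 _ 1 (by norm_num), pcnt_zero, pcnt_one] at h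
    omega

lemma odd_c_even {L c1 : ℕ}
    (h : pcnt (gv (c1 * 2 ^ (L+2) + (2 ^ (L+1) - 1) + 1))
        = pcnt (gv (c1 * 2 ^ (L+2) + (2 ^ (L+1) - 1))) + 1) : c1 % 2 = 0 := by
  have hp1 : (2:ℕ) ^ (L+1) = 2 * 2 ^ L := by ring
  have hp2 : (2:ℕ) ^ (L+2) = 2 * 2 ^ (L+1) := by ring
  have hpos : (0:ℕ) < 2 ^ L := Nat.pow_pos (by norm_num)
  rcases Nat.mod_two_eq_zero_or_one c1 with hc | hc
  · exact hc
  exfalso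
  have hgv1 : gv (2 ^ (L+1) - 1) = 2 ^ L := by
    have hh := gv_two_pow_sub_one (j := L+1) (by omega)
    rwa [Nat.add_sub_cancel] at hh
  have e1 : c1 * 2 ^ (L+2) + (2 ^ (L+1) - 1) + 1 = c1 * 2 ^ (L+2) + 2 ^ (L+1) := by omega
  rw [e1, gv_mulAdd (by omega) c1 _ (by omega),
    gv_mulAdd (by omega) c1 _ (by omega : 2 ^ (L+1) - 1 < 2 ^ (L+2))] at h
  simp only [show L + 2 - 1 = L + 1 from rfl] at h
  rw [hc, one_mul, gv_two_pow (by omega : 1 ≤ L + 1), Nat.add_sub_cancel,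
    two_pow_add_xor_self (by omega), hgv1,
    Nat.xor_comm, two_pow_xor_two_pow (by omega : L < L + 1)] at h
  rw [pcnt_split _ _ _ (show (2:ℕ) ^ L < 2 ^ (L+2) by omega)] at h
  rw [show (2:ℕ) ^ (L+1) + 2 ^ L = 1 * 2 ^ (L+1) + 2 ^ L by ring] at h
  rw [pcnt_split _ _ _ (show (1:ℕ) * 2 ^ (L+1) + 2 ^ L < 2 ^ (L+2) by omega)] at h
  rw [pcnt_split _ _ _ (show (2:ℕ) ^ L < 2 ^ (L+1) by omega), pcnt_one, pcnt_two_pow] at h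
  omega

lemma mulAdd_lt_pow {c s n r t : ℕ} (hs : s ≤ n) (h : c * 2 ^ s + r < 2 ^ n) (ht : t < 2 ^ s) :
    c * 2 ^ s + t < 2 ^ n := by
  have h2 : c * 2 ^ s < 2 ^ n := by omega
  have hd : (2:ℕ) ^ n = 2 ^ (n-s) * 2 ^ s := by
    rw [← pow_add]
    congr 1
    omega
  have hc : c < 2 ^ (n-s) := by
    by_contra hcc
    push_neg at hcc
    have := Nat.mul_le_mul_right (2 ^ s) hcc
    omega
  have h3 : c + 1 ≤ 2 ^ (n-s) := hc
  have h4 := Nat.mul_le_mul_right (2 ^ s) h3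
  have hexp : (c+1) * 2 ^ s = c * 2 ^ s + 2 ^ s := by ring
  omega

/-! ### the glue: from numeric facts to the successor in `grayLevel` -/

lemma final_glue (n k : ℕ) (a b : Fin (grayLevel n k).length)
    (hab : (b : ℕ) = ((a : ℕ) + 1) % (grayLevel n k).length)
    (x : List Bool) (hx : x = (grayLevel n k).get a)
    (m d : ℕ) (hd : 0 < d) (hmd : m + d < 2 ^ n)
    (hxm : x = bits n (gv m))
    (hk : pcnt (gv m) = k)
    (hwd : pcnt (gv (m + d)) = k)
    (hmid : ∀ j, 0 < j → j < d → pcnt (gv m) < pcnt (gv (m + j))) :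
    (grayLevel n k).get b = bits n (gv (m + d)) := by
  have hlen : (gray n).length = 2 ^ n := length_gray n
  have hm2 : m < 2 ^ n := by omega
  have hmdlen : m + d < (gray n).length := by omega
  set P : List Bool → Bool := fun y => decide (y.count true = k) with hP
  have hGL : grayLevel n k = (gray n).filter P := rfl
  have hPm : P ((gray n)[m]'(by omega)) = true := by
    rw [gray_getElem hm2]
    simp only [hP, decide_eq_true_eq]
    rw [count_bits n _ (gv_lt hm2)]
    exact hk
  have hPmd : P ((gray n)[m + d]'hmdlen) = true := by
    rw [gray_getElem (by omega)]
    simp only [hP, decide_eq_true_eq]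
    rw [count_bits n _ (gv_lt (by omega))]
    exact hwd
  have hmidP : ∀ j (hj : j < (gray n).length), m < j → j < m + d →
      P ((gray n)[j]'hj) = false := by
    intro j hj h1 h2
    rw [gray_getElem (by omega)]
    simp only [hP, decide_eq_false_iff_not]
    rw [count_bits n _ (gv_lt (by omega))]
    have h3 := hmid (j - m) (by omega) (by omega)
    rw [show m + (j - m) = j by omega] at h3
    omega
  obtain ⟨t, ht1, ht2⟩ := filter_succ_aux (gray n) P m d hd hmdlen hPm hPmd hmidP
  rw [← hGL] at ht1 ht2
  obtain ⟨htlt, htval⟩ := List.getElem?_eq_some_iff.mp ht1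
  obtain ⟨ht1lt, ht1val⟩ := List.getElem?_eq_some_iff.mp ht2
  have hxt : (grayLevel n k)[t]'htlt = x := by
    rw [htval, gray_getElem hm2, ← hxm]
  have hat : (a : ℕ) = t := by
    have h1 : (grayLevel n k)[(a:ℕ)]'a.isLt = (grayLevel n k)[t]'htlt := by
      rw [hxt, ← List.get_eq_getElem]
      exact hx.symm
    have hnd : (grayLevel n k).Nodup := by
      rw [hGL]
      exact (nodup_gray n).filter _
    exact (List.Nodup.getElem_inj_iff hnd).mp h1
  have hblt : (b : ℕ) = t + 1 := by
    rw [hab, hat]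
    exact Nat.mod_eq_of_lt ht1lt
  have hbfin : b = ⟨t + 1, ht1lt⟩ := Fin.ext hblt
  rw [hbfin, List.get_eq_getElem, ht1val, gray_getElem (by omega)]

end GrayAux

open GrayAux in
/-- For an upward vertex `x` of weight `k` (`0 < k < n`) with first 1 at (1-based)
position `i`, the successor of `x` in `Γ_{n,k}` is obtained by flipping bits `i-1` and
`i` (`k` even) or bits `i+1` and `i` (`k` odd), and the common upper neighbor
`up(x, s(x))` (the bitwise OR) is obtained by flipping bit `i-1` (`k` even) or
bit `i+1` (`k` odd). -/
theorem stmt9 (n k : ℕ) (hn : 1 ≤ n) (hk0 : 0 < k) (hkn : k < n)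
    (a b : Fin (grayLevel n k).length)
    (hab : (b : ℕ) = ((a : ℕ) + 1) % (grayLevel n k).length)
    (x : List Bool) (hx : x = (grayLevel n k).get a)
    (hup : ∃ p q : Fin (gray n).length, (gray n).get p = x ∧
      (q : ℕ) = ((p : ℕ) + 1) % (gray n).length ∧
      ((gray n).get q).count true = k + 1) :
    (grayLevel n k).get b
        = flipBit (flipBit x (x.idxOf true + 1))
            (if Even k then (x.idxOf true + 1) - 1 else (x.idxOf true + 1) + 1)
    ∧ List.zipWith (· || ·) x ((grayLevel n k).get b)
        = flipBit x (if Even k then (x.idxOf true + 1) - 1 else (x.idxOf true + 1) + 1) := by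
  classical
  obtain ⟨p, q, hgp, hq, hqc⟩ := hup
  have hlen : (gray n).length = 2 ^ n := length_gray n
  have hget : ∀ r : Fin (gray n).length, (gray n).get r = bits n (gv (r : ℕ)) := by
    intro r
    rw [List.get_eq_getElem]
    exact gray_getElem (by rw [← hlen]; exact r.isLt) r.isLt
  set m : ℕ := (p : ℕ) with hmdef
  have hm2 : m < 2 ^ n := by rw [← hlen]; exact p.isLt
  have hxm : x = bits n (gv m) := by rw [← hgp]; exact hget p
  have hxmem : x ∈ grayLevel n k := by
    rw [hx]
    exact List.get_mem _ _
  have hcount : x.count true = k := by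
    have h := List.mem_filter.mp (show x ∈ (gray n).filter (fun y => y.count true = k) from hxmem)
    simpa using h.2
  have hk : pcnt (gv m) = k := by
    rw [hxm, count_bits n (gv m) (gv_lt hm2)] at hcount
    exact hcount
  have hpn : m + 1 < 2 ^ n := by
    by_contra hcon
    have hq0 : (q : ℕ) = 0 := by
      rw [hq, hlen]
      have : m + 1 = 2 ^ n := by omega
      rw [hmdef] at this
      rw [this, Nat.mod_self]
    have h2 : ((gray n).get q).count true = 0 := by
      rw [hget q, hq0]
      rw [show gv 0 = 0 from rfl, count_bits n 0 (Nat.pow_pos (by norm_num)), pcnt_zero]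
    omega
  have hup' : pcnt (gv (m + 1)) = k + 1 := by
    have hqv : (q : ℕ) = m + 1 := by
      rw [hq, hlen]
      exact Nat.mod_eq_of_lt hpn
    rw [hget q, hqv, count_bits n _ (gv_lt hpn)] at hqc
    exact hqc
  have hv0 : gv m ≠ 0 := by
    intro h
    rw [h, pcnt_zero] at hk
    omega
  have hex : ∃ j, (gv m).testBit j = true := by
    by_contra hcon
    push_neg at hcon
    apply hv0
    apply Nat.eq_of_testBit_eq
    intro i
    simp only [Nat.zero_testBit]
    cases h : (gv m).testBit i
    · rfl
    · exact absurd h (hcon i)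
  set L := Nat.find hex with hLdef
  have hvL : (gv m).testBit L = true := Nat.find_spec hex
  have hlowL : ∀ j < L, (gv m).testBit j = false := by
    intro j hj
    have := Nat.find_min hex hj
    simpa using this
  have hLn : L < n := by
    have h1 : 2 ^ L ≤ gv m := Nat.ge_two_pow_of_testBit hvL
    have h2 : gv m < 2 ^ n := gv_lt hm2
    exact (Nat.pow_lt_pow_iff_right (by norm_num : 1 < 2)).mp (lt_of_le_of_lt h1 h2)
  have hidx : x.idxOf true = L := by
    rw [hxm]
    exact indexOf_bits n (gv m) L hLn hvL hlowL
  have hpar : k % 2 = m % 2 := by rw [← hk]; exact pcnt_gv_parity m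
  have hpowL : (0:ℕ) < 2 ^ L := Nat.pow_pos (by norm_num)
  have hpL1 : (2:ℕ) ^ (L+1) = 2 * 2 ^ L := by ring
  have hpL2 : (2:ℕ) ^ (L+2) = 2 * 2 ^ (L+1) := by ring
  rcases Nat.mod_two_eq_zero_or_one m with hmp | hmp
  · -- even case
    have hkE : Even k := Nat.even_iff.mpr (by omega)
    have hstru : m % 2 ^ (L+2) = 2 ^ (L+1) := struct_even hmp hvL hlowL
    obtain ⟨c, hmform⟩ : ∃ c, m = c * 2 ^ (L+2) + 2 ^ (L+1) := by
      refine ⟨m / 2 ^ (L+2), ?_⟩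
      rw [← hstru, Nat.mul_comm]
      exact (Nat.div_add_mod m _).symm
    have hL1 : 1 ≤ L := by
      by_contra hL0
      have hL0' : L = 0 := by omega
      apply even_L0_absurd c
      have hm4 : m = c * 4 + 2 := by
        rw [hmform, hL0']
        norm_num
      rw [← hm4, hup', hk]
    obtain ⟨hmid, hwd, hflips, hors⟩ := even_pack hL1 hmform
    have hL2n : L + 2 ≤ n := by
      have h1 : 2 ^ (L+1) ≤ m := by rw [hmform]; omega
      have h2 : (2:ℕ) ^ (L+1) < 2 ^ n := lt_of_le_of_lt h1 hm2
      have := (Nat.pow_lt_pow_iff_right (by norm_num : 1 < 2)).mp h2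
      omega
    have hmd : m + 2 ^ L < 2 ^ n := by
      have ht : (2:ℕ) ^ (L+1) + 2 ^ L < 2 ^ (L+2) := by omega
      have hb := mulAdd_lt_pow (r := 2 ^ (L+1)) hL2n (by rw [← hmform]; exact hm2) ht
      rw [hmform]
      omega
    have hgetb := final_glue n k a b hab x hx m (2 ^ L) hpowL hmd hxm hk
      (by rw [hwd, hk]) hmid
    constructor
    · rw [hgetb, hidx, if_pos hkE, hxm, flipBit_bits hLn,
        show L + 1 - 1 = (L - 1) + 1 by omega, flipBit_bits (show L - 1 < n by omega), hflips]
    · rw [hgetb, hidx, if_pos hkE, hxm, zipWith_or_bits,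
        show L + 1 - 1 = (L - 1) + 1 by omega, flipBit_bits (show L - 1 < n by omega), hors]
  · -- odd case
    have hkO : ¬ Even k := by
      rw [Nat.even_iff]
      omega
    have hstru : m % 2 ^ (L+2) = 2 ^ (L+1) - 1 := struct_odd hmp hvL hlowL
    obtain ⟨c1, hm1form⟩ : ∃ c1, m = c1 * 2 ^ (L+2) + (2 ^ (L+1) - 1) := by
      refine ⟨m / 2 ^ (L+2), ?_⟩
      rw [← hstru, Nat.mul_comm]
      exact (Nat.div_add_mod m _).symm
    have hc1 : c1 % 2 = 0 := by
      apply odd_c_even (L := L)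
      rw [← hm1form, hup', hk]
    obtain ⟨c, hc1e⟩ : ∃ c, c1 = 2 * c := ⟨c1 / 2, by omega⟩
    have hmform : m = c * 2 ^ (L+3) + (2 ^ (L+1) - 1) := by
      rw [hm1form, hc1e, show (2:ℕ) ^ (L+3) = 2 ^ (L+2) * 2 by ring]
      ring
    obtain ⟨hmid, hwd, hflips, hors⟩ := odd_pack hmform
    have hL1n : L + 1 < n := by
      have h1 : 2 ^ (L+1) ≤ m + 1 := by rw [hmform]; omega
      have h2 : (2:ℕ) ^ (L+1) < 2 ^ n := lt_of_le_of_lt h1 hpn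
      exact (Nat.pow_lt_pow_iff_right (by norm_num : 1 < 2)).mp h2
    have hmd : m + 2 ^ (L+1) < 2 ^ n := by
      have hm2c : m = (2 * c) * 2 ^ (L+2) + (2 ^ (L+1) - 1) := by
        rw [hmform, show (2 * c) * 2 ^ (L+2) = c * 2 ^ (L+3) by
          rw [show (2:ℕ) ^ (L+3) = 2 ^ (L+2) * 2 by ring]; ring]
      have hb := mulAdd_lt_pow (r := 2 ^ (L+1) - 1) (show L + 2 ≤ n by omega)
        (by rw [← hm2c]; exact hm2) (show (2:ℕ) ^ (L+2) - 1 < 2 ^ (L+2) by omega)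
      rw [hm2c]
      omega
    have hgetb := final_glue n k a b hab x hx m (2 ^ (L+1)) (by omega) hmd hxm hk
      (by rw [hwd, hk]) hmid
    constructor
    · rw [hgetb, hidx, if_neg hkO, hxm, flipBit_bits hLn, flipBit_bits hL1n, hflips]
    · rw [hgetb, hidx, if_neg hkO, hxm, zipWith_or_bits, flipBit_bits hL1n, hors]
end
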